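/- For non-negative integers n and p, the identity [2n+2p choose p]_q = Σ_{j≥0} q^{j(n+j)} [n+p choose j]_q [n+p choose p-j]_q holds. -/

import Mathlib

open Polynomial

/-- The `q`-factorial `[n]! = ∏_{i=1}^n (1 + q + ⋯ + q^{i-1})` in `ℚ(q)`. -/
noncomputable def qFac (n : ℕ) : RatFunc ℚ :=
  ∏ i ∈ Finset.range n, ∑ j ∈ Finset.range (i + 1), RatFunc.X ^ j

/-- The Gaussian binomial coefficient `[n choose m]_q`, zero when out of range. -/
noncomputable def qBinom (n m : ℕ) : RatFunc ℚ :=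
  if m ≤ n then qFac n / (qFac (n - m) * qFac m) else 0


noncomputable def S (m : ℕ) : RatFunc ℚ := ∑ j ∈ Finset.range m, RatFunc.X ^ j

lemma S_ne_zero (m : ℕ) : S (m + 1) ≠ 0 := by
  have : S (m+1) = algebraMap (ℚ[X]) (RatFunc ℚ) (∑ j ∈ Finset.range (m+1), X ^ j) := by
    rw [map_sum]; simp [S, RatFunc.algebraMap_X]
  rw [this]
  apply RatFunc.algebraMap_ne_zero
  intro h
  have := congrArg (Polynomial.eval (1:ℚ)) h
  simp [Polynomial.eval_finset_sum] at this
  exact_mod_cast this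

lemma qFac_succ (n : ℕ) : qFac (n + 1) = qFac n * S (n + 1) := by
  rw [qFac, Finset.prod_range_succ]; rfl

lemma qFac_ne_zero (n : ℕ) : qFac n ≠ 0 := by
  induction n with
  | zero => simp [qFac]
  | succ n ih => rw [qFac_succ]; exact mul_ne_zero ih (S_ne_zero n)

lemma qFac_zero : qFac 0 = 1 := by simp [qFac]

lemma qBinom_zero (n : ℕ) : qBinom n 0 = 1 := by
  simp [qBinom, qFac_zero, div_self (qFac_ne_zero n)]

lemma qBinom_self (n : ℕ) : qBinom n n = 1 := by
  simp [qBinom, qFac_zero, div_self (qFac_ne_zero n)]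

lemma qBinom_of_gt {n m : ℕ} (h : n < m) : qBinom n m = 0 := by
  simp [qBinom, Nat.not_le.mpr h]

lemma S_split (a b : ℕ) : S (a + b) = S a + RatFunc.X ^ a * S b := by
  simp only [S, Finset.sum_range_add]
  rw [Finset.mul_sum]
  congr 1
  exact Finset.sum_congr rfl fun i _ => pow_add _ _ _

lemma pascalA (n j : ℕ) : qBinom (n+1) (j+1) = qBinom n j + RatFunc.X ^ (j+1) * qBinom n (j+1) := by
  rcases lt_trichotomy j n with h | rfl | h
  · have h2 : j + 1 ≤ n := h
    have e3 : n - (j+1) = n - j - 1 := by omega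
    rw [qBinom, qBinom, qBinom, if_pos (by omega : j+1 ≤ n+1), if_pos h2, if_pos h.le]
    rw [(by omega : n + 1 - (j+1) = n - j), qFac_succ n, qFac_succ j, e3,
      (by omega : n - j = (n - j - 1) + 1), qFac_succ (n-j-1)]
    have hS : S (n+1) = S (j+1) + RatFunc.X ^ (j+1) * S (n - j - 1 + 1) := by
      rw [show n+1 = (j+1)+(n-j-1+1) by omega, S_split]
    rw [hS]
    have h1 := S_ne_zero j
    have h2' := S_ne_zero (n - j - 1)
    have h3 := qFac_ne_zero j
    have h4 := qFac_ne_zero (n - j - 1)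
    have h5 := qFac_ne_zero n
    simp only [Nat.add_sub_cancel]
    field_simp
  · rw [qBinom_self, qBinom_self, qBinom_of_gt (by omega), mul_zero, add_zero]
  · rw [qBinom_of_gt (by omega), qBinom_of_gt (by omega), qBinom_of_gt (by omega), mul_zero, add_zero]

lemma pascalB (n j : ℕ) : qBinom (n+1) (j+1) = RatFunc.X ^ (n-j) * qBinom n j + qBinom n (j+1) := by
  rcases lt_trichotomy j n with h | rfl | h
  · have h2 : j + 1 ≤ n := h
    have e3 : n - (j+1) = n - j - 1 := by omega
    rw [qBinom, qBinom, qBinom, if_pos (by omega : j+1 ≤ n+1), if_pos h2, if_pos h.le]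
    rw [(by omega : n + 1 - (j+1) = n - j), qFac_succ n, qFac_succ j, e3,
      (by omega : n - j = (n - j - 1) + 1), qFac_succ (n-j-1)]
    have hS : S (n+1) = S (n - j - 1 + 1) + RatFunc.X ^ (n - j - 1 + 1) * S (j + 1) := by
      rw [show n+1 = (n-j-1+1)+(j+1) by omega, S_split]
    rw [hS, (by omega : n - j = n - j - 1 + 1)]
    have h1 := S_ne_zero j
    have h2' := S_ne_zero (n - j - 1)
    have h3 := qFac_ne_zero j
    have h4 := qFac_ne_zero (n - j - 1)
    have h5 := qFac_ne_zero n
    simp only [Nat.add_sub_cancel]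
    field_simp
    ring
  · rw [qBinom_self, qBinom_self, qBinom_of_gt (by omega), add_zero, Nat.sub_self, pow_zero, one_mul]
  · rw [qBinom_of_gt (by omega), qBinom_of_gt (by omega), qBinom_of_gt (by omega), mul_zero, add_zero]

lemma absorb (k j : ℕ) : S (j+1) * qBinom k (j+1) = S (k - j) * qBinom k j := by
  rcases lt_trichotomy j k with h | rfl | h
  · have h2 : j + 1 ≤ k := h
    rw [qBinom, qBinom, if_pos h2, if_pos h.le,
      (by omega : k - j = k - j - 1 + 1), qFac_succ j, qFac_succ (k - j - 1),
      (by omega : k - (j+1) = k - j - 1)]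
    have h1 := S_ne_zero j
    have h2' := S_ne_zero (k - j - 1)
    have h3 := qFac_ne_zero j
    have h4 := qFac_ne_zero (k - j - 1)
    have h5 := qFac_ne_zero k
    field_simp
  · rw [qBinom_of_gt (by omega), Nat.sub_self, mul_zero]
    simp [S]
  · rw [qBinom_of_gt (by omega), qBinom_of_gt (by omega), mul_zero, mul_zero]

lemma geom (m : ℕ) : (RatFunc.X - 1) * S m = RatFunc.X ^ m - 1 := by
  rw [mul_comm, S, geom_sum_mul]

lemma key (k a i : ℕ) :
    RatFunc.X ^ (a+k+1+i*(a+1+i)) * qBinom k i + RatFunc.X ^ ((i+1)*(a+i+1)) * qBinom k (i+1)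
    = RatFunc.X ^ ((i+1)*(a+i+1)) * qBinom k i
      + RatFunc.X ^ ((i+1)*(a+i+1)+(i+1)) * qBinom k (i+1) := by
  by_cases h : i ≤ k
  · have habs := congrArg (fun z => (RatFunc.X - 1) * z) (absorb k i)
    simp only [← mul_assoc, geom] at habs
    -- habs : (X^(i+1) - 1) * qBinom k (i+1) = (X^(k-i) - 1) * qBinom k i
    have ht : a+k+1+i*(a+1+i) = (i+1)*(a+i+1) + (k-i) := by
      have : (i+1)*(a+i+1) = i*(a+1+i) + (a+i+1) := by ring
      omega
    rw [ht, pow_add, pow_add]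
    linear_combination (-(RatFunc.X ^ ((i+1)*(a+i+1)))) * habs
  · rw [qBinom_of_gt (by omega), qBinom_of_gt (by omega)]
    ring

lemma vandermonde (k a r : ℕ) :
    qBinom (a + r + k) r = ∑ j ∈ Finset.range (r+1),
      RatFunc.X ^ (j*(a+j)) * qBinom (a+r) (r-j) * qBinom k j := by
  induction k generalizing a r with
  | zero =>
    rw [Finset.sum_eq_single_of_mem 0 (by simp) ?h0]
    · simp [qBinom_zero]
    · intro j _ hj
      rw [qBinom_of_gt (show (0:ℕ) < j by omega), mul_zero]
  | succ k ih =>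
    cases r with
    | zero => simp [qBinom_zero]
    | succ s =>
      have h1 : qBinom (a+(s+1)+k) s = ∑ j ∈ Finset.range (s+1),
          RatFunc.X ^ (j*(a+1+j)) * qBinom (a+(s+1)) (s-j) * qBinom k j := by
        rw [show a+(s+1)+k = (a+1)+s+k by omega]
        rw [show (a:ℕ)+(s+1) = (a+1)+s by omega]
        exact ih (a+1) s
      have h2 := ih a (s+1)
      rw [show a + (s+1) + (k+1) = (a+(s+1)+k)+1 by omega, pascalB (a+(s+1)+k) s,
        (by omega : a+(s+1)+k - s = a+k+1), h1, h2]
      rw [Finset.sum_range_succ' _ (s+1), Finset.sum_range_succ' _ (s+1)]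
      simp only [qBinom_zero, pow_zero, one_mul, mul_one, Nat.zero_mul, Nat.sub_zero,
        Nat.succ_sub_succ]
      rw [← add_assoc, Finset.mul_sum, ← Finset.sum_add_distrib]
      congr 1
      apply Finset.sum_congr rfl
      intro i _
      rw [pascalA k i]
      have hkey := key k a i
      linear_combination (qBinom (a+(s+1)) (s-i)) * hkey

theorem q_main_identity (n p : ℕ) :
    qBinom (2 * n + 2 * p) p =
      ∑ j ∈ Finset.range (p + 1),
        RatFunc.X ^ (j * (n + j)) * qBinom (n + p) j * qBinom (n + p) (p - j) := by
  rw [show 2*n+2*p = n+p+(n+p) by omega, vandermonde (n+p) n p]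
  apply Finset.sum_congr rfl
  intro j _
  ring
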